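/- arXiv:1109.5204 — 3 statements merged into one kernel-verified Lean document; each statement's English description precedes it below -/
import Mathlib

section
/- If k ≤ 0, then every solution of the system with nonnegative initial data converges to the origin as t → ∞. -/
open Filter

open Set in
private lemma antiOn_aux {f f' : ℝ → ℝ} {a : ℝ} (hd : ∀ t ≥ a, HasDerivAt f (f' t) t)
    (h0 : ∀ t ≥ a, f' t ≤ 0) : AntitoneOn f (Ici a) := by
  apply antitoneOn_of_deriv_nonpos (convex_Ici a)
  · exact fun t ht => (hd t ht).continuousAt.continuousWithinAt
  · rw [interior_Ici]
    exact fun t ht => ((hd t (le_of_lt ht)).differentiableAt).differentiableWithinAt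
  · rw [interior_Ici]
    intro t ht
    rw [(hd t (le_of_lt ht)).deriv]
    exact h0 t (le_of_lt ht)

open Set in
private lemma monoOn_aux {f f' : ℝ → ℝ} {a : ℝ} (hd : ∀ t ≥ a, HasDerivAt f (f' t) t)
    (h0 : ∀ t ≥ a, 0 ≤ f' t) : MonotoneOn f (Ici a) := by
  apply monotoneOn_of_deriv_nonneg (convex_Ici a)
  · exact fun t ht => (hd t ht).continuousAt.continuousWithinAt
  · rw [interior_Ici]
    exact fun t ht => ((hd t (le_of_lt ht)).differentiableAt).differentiableWithinAt
  · rw [interior_Ici]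
    intro t ht
    rw [(hd t (le_of_lt ht)).deriv]
    exact h0 t (le_of_lt ht)

private lemma exp_deriv_aux (c s : ℝ) :
    HasDerivAt (fun r => Real.exp (c * r)) (Real.exp (c * s) * c) s := by
  have := ((hasDerivAt_id s).const_mul c).exp
  simpa using this

open Set in
/-- If `f' = c (u - f)` with `c > 0` and `u → L`, then `f → L`. -/
private lemma driven_limit {c L : ℝ} (hc : 0 < c) {u f : ℝ → ℝ}
    (hu : Tendsto u atTop (nhds L))
    (hf : ∀ t ≥ (0:ℝ), HasDerivAt f (c * (u t - f t)) t) :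
    Tendsto f atTop (nhds L) := by
  have hexp := exp_deriv_aux c
  set g : ℝ → ℝ := fun t => Real.exp (c * t) * (f t - L) with hgdef
  have hg : ∀ t ≥ (0:ℝ), HasDerivAt g (Real.exp (c * t) * (c * (u t - L))) t := by
    intro t ht
    have h2 : HasDerivAt (fun s => f s - L) (c * (u t - f t)) t := (hf t ht).sub_const L
    have := (hexp t).mul h2
    convert this using 1
    all_goals first | rfl | ring
  rw [Metric.tendsto_atTop]
  intro ε hε
  set ε' := ε / 3 with hε'def
  have hε' : 0 < ε' := by positivity
  obtain ⟨T₀, hT₀⟩ := Metric.tendsto_atTop.1 hu ε' hε'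
  set T := max T₀ 0 with hTdef
  have hT0 : (0:ℝ) ≤ T := le_max_right _ _
  have hub : ∀ t ≥ T, |u t - L| < ε' := fun t ht => by
    have := hT₀ t (le_trans (le_max_left _ _) ht)
    rwa [Real.dist_eq] at this
  -- upper bound: φ antitone
  have hφ : AntitoneOn (fun t => g t - ε' * Real.exp (c * t)) (Ici T) := by
    apply antiOn_aux (f' := fun t => Real.exp (c * t) * (c * (u t - L)) - ε' * (Real.exp (c * t) * c))
    · intro t ht
      exact (hg t (le_trans hT0 ht)).sub ((hexp t).const_mul ε')
    · intro t ht
      have h1 : u t - L ≤ ε' := le_of_lt (lt_of_le_of_lt (le_abs_self _) (hub t ht))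
      have h2 : (0:ℝ) < Real.exp (c * t) := Real.exp_pos _
      have h3 : 0 ≤ (Real.exp (c * t) * c) * (ε' - (u t - L)) :=
        mul_nonneg (mul_pos h2 hc).le (by linarith)
      nlinarith [h3]
  -- lower bound: ψ monotone
  have hψ : MonotoneOn (fun t => g t + ε' * Real.exp (c * t)) (Ici T) := by
    apply monoOn_aux (f' := fun t => Real.exp (c * t) * (c * (u t - L)) + ε' * (Real.exp (c * t) * c))
    · intro t ht
      exact (hg t (le_trans hT0 ht)).add ((hexp t).const_mul ε')
    · intro t ht
      have h1 : -ε' ≤ u t - L := le_of_lt (lt_of_lt_of_le (neg_lt_of_abs_lt (hub t ht)) (le_refl _))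
      have h2 : (0:ℝ) < Real.exp (c * t) := Real.exp_pos _
      have h3 : 0 ≤ (Real.exp (c * t) * c) * ((u t - L) + ε') :=
        mul_nonneg (mul_pos h2 hc).le (by linarith)
      nlinarith [h3]
  -- tail where exp(-ct)|g T| is small
  have htail : Tendsto (fun t => Real.exp (-(c * t)) * |g T|) atTop (nhds 0) := by
    have h1 : Tendsto (fun t : ℝ => -(c * t)) atTop atBot :=
      tendsto_neg_atTop_atBot.comp ((tendsto_const_mul_atTop_of_pos hc).2 tendsto_id)
    have h2 := Real.tendsto_exp_atBot.comp h1
    simpa using h2.mul_const |g T|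
  obtain ⟨T', hT'⟩ := (Metric.tendsto_atTop.1 htail ε' hε')
  refine ⟨max T T', fun n hn => ?_⟩
  have hnT : T ≤ n := le_trans (le_max_left _ _) hn
  have hnT' : T' ≤ n := le_trans (le_max_right _ _) hn
  have hsmall : Real.exp (-(c * n)) * |g T| < ε' := by
    have := hT' n hnT'
    rw [Real.dist_eq] at this
    calc Real.exp (-(c * n)) * |g T| ≤ |Real.exp (-(c * n)) * |g T| - 0| := by
          rw [sub_zero]; exact le_abs_self _
      _ < ε' := this
  have hepos : (0:ℝ) < Real.exp (c * n) := Real.exp_pos _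
  have hinv : Real.exp (-(c * n)) * Real.exp (c * n) = 1 := by
    rw [← Real.exp_add]; ring_nf; exact Real.exp_zero
  have henn : (0:ℝ) ≤ Real.exp (-(c * n)) := le_of_lt (Real.exp_pos _)
  have hup := hφ (mem_Ici.2 (le_refl T)) (mem_Ici.2 hnT) hnT
  have hdown := hψ (mem_Ici.2 (le_refl T)) (mem_Ici.2 hnT) hnT
  simp only at hup hdown
  have hgTpos : (0:ℝ) < ε' * Real.exp (c * T) := by positivity
  have h1 : g n ≤ g T + ε' * Real.exp (c * n) := by nlinarith
  have h2 : g T - ε' * Real.exp (c * n) ≤ g n := by nlinarith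
  have h3 := mul_le_mul_of_nonneg_left h1 henn
  have h4 := mul_le_mul_of_nonneg_left h2 henn
  have hfn : Real.exp (-(c * n)) * g n = f n - L := by
    rw [hgdef]; dsimp only
    rw [← mul_assoc, hinv, one_mul]
  rw [Real.dist_eq, abs_lt]
  constructor
  · have : Real.exp (-(c * n)) * (g T - ε' * Real.exp (c * n)) =
        Real.exp (-(c * n)) * g T - ε' := by
      rw [mul_sub]
      congr 1
      rw [mul_comm ε', ← mul_assoc, hinv, one_mul]
    rw [this, hfn] at h4
    have hb : -(Real.exp (-(c * n)) * |g T|) ≤ Real.exp (-(c * n)) * g T := by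
      rw [← mul_neg]
      exact mul_le_mul_of_nonneg_left (neg_abs_le _) henn
    have : -ε' - ε' ≤ f n - L := by linarith
    linarith [hε'def ▸ this]
  · have : Real.exp (-(c * n)) * (g T + ε' * Real.exp (c * n)) =
        Real.exp (-(c * n)) * g T + ε' := by
      rw [mul_add]
      congr 1
      rw [mul_comm ε', ← mul_assoc, hinv, one_mul]
    rw [this, hfn] at h3
    have hb : Real.exp (-(c * n)) * g T ≤ Real.exp (-(c * n)) * |g T| :=
      mul_le_mul_of_nonneg_left (le_abs_self _) henn
    have : f n - L ≤ ε' + ε' := by linarith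
    linarith

open Set in
/-- Sign preservation for `f' = c (r - f)` with `c > 0` and `r ≥ 0` on `[0, ∞)`. -/
private lemma pos_aux {c : ℝ} (hc : 0 < c) {r f : ℝ → ℝ} (hr : ∀ t ≥ (0:ℝ), 0 ≤ r t)
    (hf : ∀ t ≥ (0:ℝ), HasDerivAt f (c * (r t - f t)) t) (h0 : 0 ≤ f 0) :
    ∀ t ≥ (0:ℝ), 0 ≤ f t := by
  have hexp := exp_deriv_aux c
  set g : ℝ → ℝ := fun t => Real.exp (c * t) * f t with hgdef
  have hmono : MonotoneOn g (Ici 0) := by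
    apply monoOn_aux (f' := fun t => Real.exp (c * t) * (c * r t))
    · intro t ht
      have := (hexp t).mul (hf t ht)
      convert this using 1
      all_goals first | rfl | ring
    · intro t ht
      exact mul_nonneg (Real.exp_pos _).le (mul_nonneg hc.le (hr t ht))
  intro t ht
  have h1 : g 0 ≤ g t := hmono (mem_Ici.2 (le_refl 0)) (mem_Ici.2 ht) ht
  have h2 : 0 ≤ g 0 := by
    rw [hgdef]; dsimp only
    exact mul_nonneg (Real.exp_pos _).le h0
  have h3 : 0 ≤ Real.exp (c * t) * f t := le_trans h2 h1
  nlinarith [Real.exp_pos (c * t)]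

open Set in
/-- Nonnegativity of `x` via an integrating factor. -/
private lemma xpos_aux {k : ℝ} {x y : ℝ → ℝ}
    (hycont : ∀ t ≥ (0:ℝ), ContinuousAt y t)
    (hx : ∀ t ≥ (0:ℝ), HasDerivAt x (k * x t - x t * y t) t)
    (hx0 : 0 ≤ x 0) : ∀ t ≥ (0:ℝ), 0 ≤ x t := by
  set ytil : ℝ → ℝ := fun t => y (max t 0) with hytil
  have hyc : Continuous ytil := by
    rw [continuous_iff_continuousAt]
    intro t
    exact ContinuousAt.comp (g := y) (f := fun s : ℝ => max s 0) (x := t)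
      (hycont (max t 0) (le_max_right _ _))
      ((continuous_id.max continuous_const).continuousAt)
  set b : ℝ → ℝ := fun t => k - ytil t with hb
  have hbc : Continuous b := continuous_const.sub hyc
  set Y : ℝ → ℝ := fun t => ∫ s in (0:ℝ)..t, b s with hY
  have hYd : ∀ t : ℝ, HasDerivAt Y (b t) t := fun t =>
    intervalIntegral.integral_hasDerivAt_right
      (hbc.intervalIntegrable 0 t) (hbc.stronglyMeasurableAtFilter _ _) hbc.continuousAt
  set g : ℝ → ℝ := fun t => x t * Real.exp (-Y t) with hg
  have hgd : ∀ t ≥ (0:ℝ), HasDerivAt g 0 t := by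
    intro t ht
    have h1 : HasDerivAt (fun s => Real.exp (-Y s)) (Real.exp (-Y t) * (-b t)) t :=
      ((hYd t).neg).exp
    have h2 := (hx t ht).mul h1
    convert h2 using 1
    any_goals rfl
    have : ytil t = y t := by rw [hytil]; simp [max_eq_left ht]
    rw [hb]
    dsimp only
    rw [this]
    ring
  have hmono : MonotoneOn g (Ici 0) :=
    monoOn_aux (f' := fun _ => (0:ℝ)) hgd (fun _ _ => le_refl 0)
  intro t ht
  have h1 : g 0 ≤ g t := hmono (mem_Ici.2 (le_refl 0)) (mem_Ici.2 ht) ht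
  have h2 : 0 ≤ g 0 := by
    rw [hg]; dsimp only
    exact mul_nonneg hx0 (Real.exp_pos _).le
  have h3 : 0 ≤ x t * Real.exp (-Y t) := le_trans h2 h1
  nlinarith [Real.exp_pos (-Y t)]

/-- If `k ≤ 0`, every solution with nonnegative initial data converges to the origin. -/
theorem stmt_9 (k k₃ k₅ : ℝ) (hk : k ≤ 0) (hk₃ : 0 < k₃) (hk₅ : 0 < k₅)
    (x y z : ℝ → ℝ)
    (hx : ∀ t ≥ (0 : ℝ), HasDerivAt x (k * x t - x t * y t) t)
    (hy : ∀ t ≥ (0 : ℝ), HasDerivAt y (k₃ * (z t - y t)) t)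
    (hz : ∀ t ≥ (0 : ℝ), HasDerivAt z (k₅ * (x t - z t)) t)
    (hx0 : 0 ≤ x 0) (hy0 : 0 ≤ y 0) (hz0 : 0 ≤ z 0) :
    Tendsto (fun t => (x t, y t, z t)) atTop (nhds ((0 : ℝ), (0 : ℝ), (0 : ℝ))) := by
  have hycont : ∀ t ≥ (0:ℝ), ContinuousAt y t := fun t ht => (hy t ht).continuousAt
  have hxpos : ∀ t ≥ (0:ℝ), 0 ≤ x t := xpos_aux hycont hx hx0
  have hzpos : ∀ t ≥ (0:ℝ), 0 ≤ z t := pos_aux hk₅ hxpos hz hz0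
  have hypos : ∀ t ≥ (0:ℝ), 0 ≤ y t := pos_aux hk₃ hzpos hy hy0
  -- x is antitone on [0, ∞)
  have hanti : AntitoneOn x (Set.Ici 0) := by
    apply antiOn_aux hx
    intro t ht
    have h1 : k * x t ≤ 0 := mul_nonpos_of_nonpos_of_nonneg hk (hxpos t ht)
    have h2 : 0 ≤ x t * y t := mul_nonneg (hxpos t ht) (hypos t ht)
    linarith
  -- limit of x
  set X : ℝ → ℝ := fun t => x (max t 0) with hXdef
  have hXanti : Antitone X := fun s t hst =>
    hanti (Set.mem_Ici.2 (le_max_right s 0)) (Set.mem_Ici.2 (le_max_right t 0))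
      (max_le_max hst (le_refl 0))
  have hbdd : BddBelow (Set.range X) := by
    refine ⟨0, fun v hv => ?_⟩
    obtain ⟨t, ht⟩ := hv
    exact ht ▸ hxpos _ (le_max_right _ _)
  set L := ⨅ t, X t with hLdef
  have hXlim : Tendsto X atTop (nhds L) := tendsto_atTop_ciInf hXanti hbdd
  have hxlim : Tendsto x atTop (nhds L) := by
    apply hXlim.congr'
    filter_upwards [eventually_ge_atTop (0:ℝ)] with t ht
    rw [hXdef]; simp [max_eq_left ht]
  have hL0 : 0 ≤ L := by
    refine ge_of_tendsto hxlim ?_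
    filter_upwards [eventually_ge_atTop (0:ℝ)] with t ht using hxpos t ht
  have hxgeL : ∀ t ≥ (0:ℝ), L ≤ x t := by
    intro t ht
    refine le_of_tendsto hxlim ?_
    filter_upwards [eventually_ge_atTop t] with s hs
    exact hanti (Set.mem_Ici.2 ht) (Set.mem_Ici.2 (le_trans ht hs)) hs
  have hzlim : Tendsto z atTop (nhds L) := driven_limit hk₅ hxlim hz
  have hylim : Tendsto y atTop (nhds L) := driven_limit hk₃ hzlim hy
  -- L = 0
  have hLzero : L = 0 := by
    by_contra hne
    have hLpos : 0 < L := lt_of_le_of_ne hL0 (Ne.symm hne)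
    obtain ⟨T₁, hT₁⟩ := eventually_atTop.1 (hylim.eventually (eventually_gt_nhds
      (show L / 2 < L by linarith)))
    set T := max T₁ 0 with hTdef
    have hT0 : (0:ℝ) ≤ T := le_max_right _ _
    have hyT : ∀ t ≥ T, L / 2 < y t := fun t ht => hT₁ t (le_trans (le_max_left _ _) ht)
    have hanti2 : AntitoneOn (fun t => x t + (L * L / 2) * t) (Set.Ici T) := by
      apply antiOn_aux (f' := fun t => (k * x t - x t * y t) + (L * L / 2))
      · intro t ht
        have h1 := (hx t (le_trans hT0 ht)).add ((hasDerivAt_id t).const_mul (L * L / 2))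
        convert h1 using 1
        all_goals first | rfl | ring
      · intro t ht
        have ht0 : (0:ℝ) ≤ t := le_trans hT0 ht
        have h1 : k * x t ≤ 0 := mul_nonpos_of_nonpos_of_nonneg hk (hxpos t ht0)
        have h2 : L * (L / 2) ≤ x t * y t :=
          mul_le_mul (hxgeL t ht0) (le_of_lt (hyT t ht)) (by linarith) (hxpos t ht0)
        nlinarith
    set A := L * L / 2 with hAdef
    have hApos : 0 < A := by rw [hAdef]; nlinarith
    set t₀ := T + (x T + 1) / A with ht₀def
    have ht₀T : T ≤ t₀ := by
      rw [ht₀def]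
      have : 0 ≤ (x T + 1) / A := div_nonneg (by nlinarith [hxpos T hT0]) hApos.le
      linarith
    have h5 := hanti2 (Set.mem_Ici.2 (le_refl T)) (Set.mem_Ici.2 ht₀T) ht₀T
    simp only at h5
    have h6 : A * ((x T + 1) / A) = x T + 1 := mul_div_cancel₀ _ (ne_of_gt hApos)
    have h7 : x t₀ ≤ -1 := by
      rw [ht₀def] at h5 ⊢
      have : x (T + (x T + 1) / A) + A * (T + (x T + 1) / A) ≤ x T + A * T := h5
      nlinarith
    have h8 := hxpos t₀ (le_trans hT0 ht₀T)
    linarith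
  rw [hLzero] at hxlim hylim hzlim
  exact hxlim.prodMk_nhds (hylim.prodMk_nhds hzlim)
end

section
/- Along any solution with x(t) > 0 for all t ≥ 0, the ratio w = z/x satisfies the differential inequality w' ≥ k₅ - (k + k₅) w, and consequently liminf_{t→∞} z(t)/x(t) ≥ k₅/(k + k₅) when k > 0. -/
open Filter

/-- Along a solution staying in the nonnegative octant with `x > 0`, the ratio `w = z/x`
satisfies `w' ≥ k₅ - (k+k₅) w`, and consequently `liminf_{t→∞} z/x ≥ k₅/(k+k₅)`
(stated in the robust form: every `c < k₅/(k+k₅)` is eventually a lower bound). -/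
theorem stmt_10 (k k₃ k₅ : ℝ) (hk : 0 < k) (hk₃ : 0 < k₃) (hk₅ : 0 < k₅)
    (x y z : ℝ → ℝ)
    (hx : ∀ t ≥ (0 : ℝ), HasDerivAt x (k * x t - x t * y t) t)
    (hy : ∀ t ≥ (0 : ℝ), HasDerivAt y (k₃ * (z t - y t)) t)
    (hz : ∀ t ≥ (0 : ℝ), HasDerivAt z (k₅ * (x t - z t)) t)
    (hxpos : ∀ t ≥ (0 : ℝ), 0 < x t)
    (hypos : ∀ t ≥ (0 : ℝ), 0 ≤ y t) (hzpos : ∀ t ≥ (0 : ℝ), 0 ≤ z t) :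
    (∀ t ≥ (0 : ℝ), ∃ w' : ℝ, HasDerivAt (fun s => z s / x s) w' t ∧
        k₅ - (k + k₅) * (z t / x t) ≤ w') ∧
    (∀ c < k₅ / (k + k₅), ∀ᶠ t in atTop, c ≤ z t / x t) := by
  set a : ℝ := k + k₅ with ha
  have hapos : 0 < a := by positivity
  -- derivative of w = z/x
  have hd : ∀ t ≥ (0:ℝ), HasDerivAt (fun s => z s / x s)
      ((k₅ * (x t - z t) * x t - z t * (k * x t - x t * y t)) / (x t)^2) t := by
    intro t ht
    exact (hz t ht).div (hx t ht) (hxpos t ht).ne'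
  have hineq : ∀ t ≥ (0:ℝ), k₅ - a * (z t / x t) ≤
      (k₅ * (x t - z t) * x t - z t * (k * x t - x t * y t)) / (x t)^2 := by
    intro t ht
    have hp := hxpos t ht
    have h1 : (k₅ * (x t - z t) * x t - z t * (k * x t - x t * y t)) / (x t)^2
        - (k₅ - a * (z t / x t)) = z t * y t / x t := by
      field_simp
      ring
    have h2 : 0 ≤ z t * y t / x t :=
      div_nonneg (mul_nonneg (hzpos t ht) (hypos t ht)) hp.le
    linarith
  refine ⟨fun t ht => ⟨_, hd t ht, hineq t ht⟩, ?_⟩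
  intro c hc
  set v : ℝ → ℝ := fun t => Real.exp (a * t) * (z t / x t - k₅ / a) with hv
  have hvd : ∀ t ≥ (0:ℝ), ∃ d, HasDerivAt v d t ∧ 0 ≤ d := by
    intro t ht
    have he : HasDerivAt (fun s => Real.exp (a * s)) (Real.exp (a * t) * a) t := by
      simpa [mul_comm] using ((hasDerivAt_id t).const_mul a).exp
    have hmul : HasDerivAt v
        (Real.exp (a * t) * a * (z t / x t - k₅ / a) +
          Real.exp (a * t) * ((k₅ * (x t - z t) * x t - z t * (k * x t - x t * y t)) / (x t)^2)) t :=
      he.mul ((hd t ht).sub_const _)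
    refine ⟨_, hmul, ?_⟩
    have heq : Real.exp (a * t) * a * (z t / x t - k₅ / a) +
        Real.exp (a * t) * ((k₅ * (x t - z t) * x t - z t * (k * x t - x t * y t)) / (x t)^2)
        = Real.exp (a * t) *
          (((k₅ * (x t - z t) * x t - z t * (k * x t - x t * y t)) / (x t)^2)
            + a * (z t / x t) - k₅) := by
      field_simp
      ring
    rw [heq]
    have h3 := hineq t ht
    have : 0 ≤ ((k₅ * (x t - z t) * x t - z t * (k * x t - x t * y t)) / (x t)^2)
        + a * (z t / x t) - k₅ := by linarith
    exact mul_nonneg (Real.exp_pos _).le this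
  have hmono : MonotoneOn v (Set.Ici (0:ℝ)) := by
    classical
    set g : ℝ → ℝ := fun t => if h : (0:ℝ) ≤ t then (hvd t h).choose else 0 with hg
    refine monotoneOn_of_hasDerivWithinAt_nonneg (f' := g) (convex_Ici 0) ?_ ?_ ?_
    · intro t ht
      obtain ⟨d, hdv, _⟩ := hvd t ht
      exact hdv.continuousAt.continuousWithinAt
    · intro t ht
      rw [interior_Ici] at ht
      have := ((hvd t (le_of_lt (Set.mem_Ioi.mp ht))).choose_spec.1).hasDerivWithinAt (s := interior (Set.Ici (0:ℝ)))
      simpa [hg, dif_pos (le_of_lt (Set.mem_Ioi.mp ht))] using this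
    · intro t ht
      rw [interior_Ici] at ht
      simpa [hg, dif_pos (le_of_lt (Set.mem_Ioi.mp ht))] using (hvd t (le_of_lt (Set.mem_Ioi.mp ht))).choose_spec.2
  -- lower bound: z t / x t ≥ k₅/a + v 0 * exp (-(a*t))
  have hlow : ∀ t ≥ (0:ℝ), k₅ / a + v 0 * Real.exp (-(a * t)) ≤ z t / x t := by
    intro t ht
    have h0 : v 0 ≤ v t := hmono Set.self_mem_Ici ht ht
    have hep : (0:ℝ) < Real.exp (a * t) := Real.exp_pos _
    have : v 0 * Real.exp (-(a * t)) ≤ z t / x t - k₅ / a := by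
      rw [Real.exp_neg]
      rw [mul_inv_le_iff₀ hep]
      calc v 0 ≤ v t := h0
        _ = (z t / x t - k₅ / a) * Real.exp (a * t) := by rw [hv]; ring
    linarith
  have htend : Tendsto (fun t : ℝ => v 0 * Real.exp (-(a * t))) atTop (nhds 0) := by
    have h1 : Tendsto (fun t : ℝ => a * t) atTop atTop :=
      tendsto_id.const_mul_atTop hapos
    have h2 : Tendsto (fun t : ℝ => Real.exp (-(a * t))) atTop (nhds 0) :=
      Real.tendsto_exp_neg_atTop_nhds_zero.comp h1
    simpa using h2.const_mul (v 0)
  have hclt : c - k₅ / a < 0 := by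
    have : k₅ / a = k₅ / (k + k₅) := by rw [ha]
    linarith [hc.trans_le (le_of_eq this.symm)]
  have hev : ∀ᶠ t in atTop, c - k₅ / a < v 0 * Real.exp (-(a * t)) :=
    htend.eventually_const_lt hclt
  filter_upwards [hev, eventually_ge_atTop (0:ℝ)] with t h1 h2
  have := hlow t h2
  linarith
end

section
/- Let k, k₃, k₅ > 0, let 0 < σ ≤ k₅/(k+k₅), 0 < ρ ≤ k₃σ/(k+k₃), and K ≥ k/ρ. Then the set B = {(x,y,z) ∈ [0,K]³ : x = 0, or (z ≥ σx and y ≥ ρx)} is positively invariant for the system x' = kx - xy, y' = k₃(z - y), z' = k₅(x - z). -/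
set_option maxHeartbeats 2000000
open Real Set Filter Topology

lemma barrier_lemma {n : ℕ} (f g : Fin n → ℝ → ℝ) (t1 Λ : ℝ) (ht1 : 0 ≤ t1)
    (hderiv : ∀ i, ∀ t ∈ Icc (0:ℝ) t1, HasDerivAt (f i) (g i t) t)
    (h0 : ∀ i, 0 ≤ f i 0)
    (key : ∀ ε : ℝ, 0 < ε → ∀ t ∈ Icc (0:ℝ) t1, ∀ i,
      (∀ j, -(ε * Real.exp (Λ * t)) ≤ f j t) → f i t = -(ε * Real.exp (Λ * t)) →
      -(Λ * (ε * Real.exp (Λ * t))) < g i t) :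
    ∀ t ∈ Icc (0:ℝ) t1, ∀ i, 0 ≤ f i t := by
  have main : ∀ ε : ℝ, 0 < ε → ∀ t ∈ Icc (0:ℝ) t1, ∀ i, -(ε * Real.exp (Λ * t)) ≤ f i t := by
    intro ε hε
    set A : Set ℝ := {T | T ∈ Icc (0:ℝ) t1 ∧
      ∀ s ∈ Icc (0:ℝ) T, ∀ i, -(ε * Real.exp (Λ * s)) ≤ f i s} with hA
    have h0A : (0:ℝ) ∈ A := by
      refine ⟨⟨le_refl _, ht1⟩, ?_⟩
      intro s hs i
      have hs0 : s = 0 := le_antisymm hs.2 hs.1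
      subst hs0
      have h1 : 0 < ε * Real.exp (Λ * 0) := mul_pos hε (Real.exp_pos _)
      linarith [h0 i]
    have hbdd : BddAbove A := ⟨t1, fun T hT => hT.1.2⟩
    have hne : A.Nonempty := ⟨0, h0A⟩
    set T' : ℝ := sSup A with hT'
    have hT'0 : 0 ≤ T' := le_csSup hbdd h0A
    have hT't1 : T' ≤ t1 := csSup_le hne (fun T hT => hT.1.2)
    have hQlt : ∀ s, 0 ≤ s → s < T' → ∀ i, -(ε * Real.exp (Λ * s)) ≤ f i s := by
      intro s hs0 hsT i
      obtain ⟨T, hTA, hsT2⟩ := exists_lt_of_lt_csSup hne hsT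
      exact hTA.2 s ⟨hs0, le_of_lt hsT2⟩ i
    have hQT' : ∀ i, -(ε * Real.exp (Λ * T')) ≤ f i T' := by
      intro i
      rcases eq_or_lt_of_le hT'0 with h | h
      · have h1 : 0 < ε * Real.exp (Λ * T') := mul_pos hε (Real.exp_pos _)
        have h2 : 0 ≤ f i T' := h ▸ h0 i
        linarith
      · have hcont : ContinuousAt (f i) T' := (hderiv i T' ⟨hT'0, hT't1⟩).continuousAt
        have hcont2 : ContinuousAt (fun s => f i s + ε * Real.exp (Λ * s)) T' :=
          hcont.add (by fun_prop)
        have hev : ∀ᶠ s in 𝓝[<] T', 0 ≤ f i s + ε * Real.exp (Λ * s) := by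
          filter_upwards [Ioo_mem_nhdsLT h] with s hs
          have := hQlt s (le_of_lt hs.1) hs.2 i
          linarith
        have hlim : Tendsto (fun s => f i s + ε * Real.exp (Λ * s)) (𝓝[<] T')
            (𝓝 (f i T' + ε * Real.exp (Λ * T'))) :=
          hcont2.tendsto.mono_left nhdsWithin_le_nhds
        have := ge_of_tendsto hlim hev
        linarith
    have hT'A : T' ∈ A := by
      refine ⟨⟨hT'0, hT't1⟩, ?_⟩
      intro s hs i
      rcases lt_or_eq_of_le hs.2 with h | h
      · exact hQlt s hs.1 h i
      · rw [h]; exact hQT' i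
    have hT'eq : T' = t1 := by
      by_contra hcon
      have hT'lt : T' < t1 := lt_of_le_of_ne hT't1 hcon
      have hallev : ∀ᶠ u in 𝓝[>] T', ∀ i, 0 < f i u + ε * Real.exp (Λ * u) := by
        rw [eventually_all]
        intro i
        have hphi0 : 0 ≤ f i T' + ε * Real.exp (Λ * T') := by linarith [hQT' i]
        rcases eq_or_lt_of_le hphi0 with heq | hlt'
        · -- boundary case : use the strict derivative inequality
          have hfi : f i T' = -(ε * Real.exp (Λ * T')) := by linarith
          have hkey := key ε hε T' ⟨hT'0, hT't1⟩ i hQT' hfi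
          have hD : HasDerivAt (fun t => f i t + ε * Real.exp (Λ * t))
              (g i T' + ε * (Real.exp (Λ * T') * (Λ * 1))) T' := by
            have h1 : HasDerivAt (fun t : ℝ => Λ * t) (Λ * 1) T' := (hasDerivAt_id T').const_mul Λ
            have h2 : HasDerivAt (fun t : ℝ => Real.exp (Λ * t))
                (Real.exp (Λ * T') * (Λ * 1)) T' :=
              (Real.hasDerivAt_exp (Λ * T')).comp T' h1
            exact (hderiv i T' ⟨hT'0, hT't1⟩).add (h2.const_mul ε)
          have hDpos : 0 < g i T' + ε * (Real.exp (Λ * T') * (Λ * 1)) := by nlinarith [hkey]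
          have hslope := hasDerivAt_iff_tendsto_slope.1 hD
          have hev1 : ∀ᶠ u in 𝓝[≠] T',
              0 < slope (fun t => f i t + ε * Real.exp (Λ * t)) T' u :=
            hslope.eventually (eventually_gt_nhds hDpos)
          have hev2 : ∀ᶠ u in 𝓝[>] T',
              0 < slope (fun t => f i t + ε * Real.exp (Λ * t)) T' u :=
            hev1.filter_mono (nhdsWithin_mono _ (fun u hu => ne_of_gt hu))
          filter_upwards [hev2, self_mem_nhdsWithin] with u hu hu'
          have hu'' : T' < u := hu'
          rw [slope_def_field] at hu
          have hnum := (div_pos_iff.1 hu)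
          rcases hnum with ⟨h1, h2⟩ | ⟨h1, h2⟩
          · linarith
          · linarith [sub_pos.2 hu'']
        · -- interior case : continuity
          have hcont : ContinuousAt (fun t => f i t + ε * Real.exp (Λ * t)) T' :=
            (hderiv i T' ⟨hT'0, hT't1⟩).continuousAt.add (by fun_prop)
          have hev : ∀ᶠ u in 𝓝 T', 0 < f i u + ε * Real.exp (Λ * u) :=
            hcont.eventually (eventually_gt_nhds hlt')
          exact hev.filter_mono nhdsWithin_le_nhds
      obtain ⟨u, hu, hsub⟩ := mem_nhdsGT_iff_exists_Ioo_subset.1 hallev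
      have huT : T' < u := hu
      have hT2gt : T' < min t1 ((T' + u) / 2) := lt_min hT'lt (by linarith)
      have hT2A : min t1 ((T' + u) / 2) ∈ A := by
        refine ⟨⟨le_trans hT'0 (le_of_lt hT2gt), min_le_left _ _⟩, ?_⟩
        intro s hs i
        rcases le_or_gt s T' with hsle | hslt
        · exact hT'A.2 s ⟨hs.1, hsle⟩ i
        · have hsu : s < u := by
            have h1 : s ≤ (T' + u) / 2 := le_trans hs.2 (min_le_right _ _)
            linarith
          have := hsub ⟨hslt, hsu⟩ i
          linarith
      have := le_csSup hbdd hT2A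
      linarith
    intro t ht i
    have ht' : t ∈ Icc 0 T' := by rw [hT'eq]; exact ht
    exact hT'A.2 t ht' i
  intro t ht i
  by_contra hneg
  push_neg at hneg
  have hexp : 0 < Real.exp (Λ * t) := Real.exp_pos _
  have hεpos : 0 < -f i t / (2 * Real.exp (Λ * t)) := by
    apply div_pos (by linarith) (by positivity)
  have h1 := main _ hεpos t ht i
  have h2 : -(-f i t / (2 * Real.exp (Λ * t)) * Real.exp (Λ * t)) = f i t / 2 := by
    field_simp
  rw [h2] at h1
  linarith

/-- The set `B = {(x,y,z) ∈ [0,K]³ : x = 0 ∨ (z ≥ σx ∧ y ≥ ρx)}` is positively invariant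
for the system, when `0 < σ ≤ k₅/(k+k₅)`, `0 < ρ ≤ k₃σ/(k+k₃)` and `K ≥ k/ρ`. -/
theorem stmt_12 (k k₃ k₅ σ ρ K : ℝ) (hk : 0 < k) (hk₃ : 0 < k₃) (hk₅ : 0 < k₅)
    (hσ : 0 < σ) (hσ' : σ ≤ k₅ / (k + k₅))
    (hρ : 0 < ρ) (hρ' : ρ ≤ k₃ * σ / (k + k₃)) (hK : k / ρ ≤ K)
    (x y z : ℝ → ℝ)
    (hx : ∀ t ≥ (0 : ℝ), HasDerivAt x (k * x t - x t * y t) t)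
    (hy : ∀ t ≥ (0 : ℝ), HasDerivAt y (k₃ * (z t - y t)) t)
    (hz : ∀ t ≥ (0 : ℝ), HasDerivAt z (k₅ * (x t - z t)) t)
    (h0 : (x 0, y 0, z 0) ∈ {p : ℝ × ℝ × ℝ |
        p.1 ∈ Set.Icc 0 K ∧ p.2.1 ∈ Set.Icc 0 K ∧ p.2.2 ∈ Set.Icc 0 K ∧
        (p.1 = 0 ∨ (σ * p.1 ≤ p.2.2 ∧ ρ * p.1 ≤ p.2.1))}) :
    ∀ t ≥ (0 : ℝ), (x t, y t, z t) ∈ {p : ℝ × ℝ × ℝ |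
        p.1 ∈ Set.Icc 0 K ∧ p.2.1 ∈ Set.Icc 0 K ∧ p.2.2 ∈ Set.Icc 0 K ∧
        (p.1 = 0 ∨ (σ * p.1 ≤ p.2.2 ∧ ρ * p.1 ≤ p.2.1))} := by
  intro t1 ht1
  obtain ⟨hx0', hy0', hz0', hd0'⟩ := h0
  replace hx0 : x 0 ∈ Set.Icc 0 K := hx0'
  replace hy0 : y 0 ∈ Set.Icc 0 K := hy0'
  replace hz0 : z 0 ∈ Set.Icc 0 K := hz0'
  replace hd0 : x 0 = 0 ∨ (σ * x 0 ≤ z 0 ∧ ρ * x 0 ≤ y 0) := hd0'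
  -- bounds on the solution over [0, t1]
  have hxc : ContinuousOn x (Icc 0 t1) := fun s hs => ((hx s hs.1).continuousAt).continuousWithinAt
  have hyc : ContinuousOn y (Icc 0 t1) := fun s hs => ((hy s hs.1).continuousAt).continuousWithinAt
  have hzc : ContinuousOn z (Icc 0 t1) := fun s hs => ((hz s hs.1).continuousAt).continuousWithinAt
  obtain ⟨Mx, hMx⟩ := isCompact_Icc.exists_bound_of_continuousOn hxc
  obtain ⟨My, hMy⟩ := isCompact_Icc.exists_bound_of_continuousOn hyc
  obtain ⟨Mz, hMz⟩ := isCompact_Icc.exists_bound_of_continuousOn hzc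
  set M : ℝ := |Mx| + |My| + |Mz| + |K| + 1 with hMdef
  have hM0 : 0 < M := by positivity
  have hKM : K ≤ M := by
    have := le_abs_self K
    have := abs_nonneg Mx; have := abs_nonneg My; have := abs_nonneg Mz
    linarith
  have hxM : ∀ s ∈ Icc (0:ℝ) t1, |x s| ≤ M := by
    intro s hs
    have h1 := hMx s hs
    rw [Real.norm_eq_abs] at h1
    have := le_abs_self Mx
    have := abs_nonneg My; have := abs_nonneg Mz; have := abs_nonneg K
    linarith
  have hyM : ∀ s ∈ Icc (0:ℝ) t1, |y s| ≤ M := by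
    intro s hs
    have h1 := hMy s hs
    rw [Real.norm_eq_abs] at h1
    have := le_abs_self My
    have := abs_nonneg Mx; have := abs_nonneg Mz; have := abs_nonneg K
    linarith
  have hzM : ∀ s ∈ Icc (0:ℝ) t1, |z s| ≤ M := by
    intro s hs
    have h1 := hMz s hs
    rw [Real.norm_eq_abs] at h1
    have := le_abs_self Mz
    have := abs_nonneg Mx; have := abs_nonneg My; have := abs_nonneg K
    linarith
  -- rewritten constant hypotheses
  have hK0 : 0 < K := lt_of_lt_of_le (div_pos hk hρ) hK
  have hK2 : k ≤ ρ * K := by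
    rw [div_le_iff₀ hρ] at hK; linarith
  have hσ2 : σ * (k + k₅) ≤ k₅ := by
    rw [le_div_iff₀ (by positivity)] at hσ'; linarith
  have hρ2 : ρ * (k + k₃) ≤ k₃ * σ := by
    rw [le_div_iff₀ (by positivity)] at hρ'; linarith
  have hσM : 0 < σ * M := mul_pos hσ hM0
  have hρM : 0 < ρ * M := mul_pos hρ hM0
  have hk₃σ : 0 < k₃ * σ := mul_pos hk₃ hσ
  set Λ : ℝ := k + k₃ + k₅ + M + σ * M + ρ * M + k₃ * σ + 1 with hΛdef
  have main := barrier_lemma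
    ![x, fun t => K - x t, y, fun t => K - y t, z, fun t => K - z t,
      fun t => z t - σ * x t, fun t => y t - ρ * x t]
    ![fun t => k * x t - x t * y t, fun t => -(k * x t - x t * y t),
      fun t => k₃ * (z t - y t), fun t => -(k₃ * (z t - y t)),
      fun t => k₅ * (x t - z t), fun t => -(k₅ * (x t - z t)),
      fun t => k₅ * (x t - z t) - σ * (k * x t - x t * y t),
      fun t => k₃ * (z t - y t) - ρ * (k * x t - x t * y t)]
    t1 Λ ht1 ?_ ?_ ?_
  · -- final conclusion from the eight inequalities
    have c0 : 0 ≤ x t1 := main t1 ⟨ht1, le_refl _⟩ 0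
    have c1 : 0 ≤ K - x t1 := main t1 ⟨ht1, le_refl _⟩ 1
    have c2 : 0 ≤ y t1 := main t1 ⟨ht1, le_refl _⟩ 2
    have c3 : 0 ≤ K - y t1 := main t1 ⟨ht1, le_refl _⟩ 3
    have c4 : 0 ≤ z t1 := main t1 ⟨ht1, le_refl _⟩ 4
    have c5 : 0 ≤ K - z t1 := main t1 ⟨ht1, le_refl _⟩ 5
    have c6 : 0 ≤ z t1 - σ * x t1 := main t1 ⟨ht1, le_refl _⟩ 6
    have c7 : 0 ≤ y t1 - ρ * x t1 := main t1 ⟨ht1, le_refl _⟩ 7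
    exact ⟨⟨c0, by linarith⟩, ⟨c2, by linarith⟩, ⟨c4, by linarith⟩,
      Or.inr ⟨by linarith, by linarith⟩⟩
  · -- derivatives
    intro i t ht
    fin_cases i
    · exact hx t ht.1
    · show HasDerivAt (fun t => K - x t) (-(k * x t - x t * y t)) t
      exact (hx t ht.1).const_sub K
    · exact hy t ht.1
    · show HasDerivAt (fun t => K - y t) (-(k₃ * (z t - y t))) t
      exact (hy t ht.1).const_sub K
    · exact hz t ht.1
    · show HasDerivAt (fun t => K - z t) (-(k₅ * (x t - z t))) t
      exact (hz t ht.1).const_sub K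
    · show HasDerivAt (fun t => z t - σ * x t)
        (k₅ * (x t - z t) - σ * (k * x t - x t * y t)) t
      exact (hz t ht.1).sub ((hx t ht.1).const_mul σ)
    · show HasDerivAt (fun t => y t - ρ * x t)
        (k₃ * (z t - y t) - ρ * (k * x t - x t * y t)) t
      exact (hy t ht.1).sub ((hx t ht.1).const_mul ρ)
  · -- initial conditions
    intro i
    fin_cases i
    · exact hx0.1
    · show (0:ℝ) ≤ K - x 0; linarith [hx0.2]
    · exact hy0.1
    · show (0:ℝ) ≤ K - y 0; linarith [hy0.2]
    · exact hz0.1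
    · show (0:ℝ) ≤ K - z 0; linarith [hz0.2]
    · show (0:ℝ) ≤ z 0 - σ * x 0
      rcases hd0 with h | h
      · rw [h]; simpa using hz0.1
      · linarith [h.1]
    · show (0:ℝ) ≤ y 0 - ρ * x 0
      rcases hd0 with h | h
      · rw [h]; simpa using hy0.1
      · linarith [h.2]
  · -- the key differential inequalities
    intro ε hε t ht i hall hi
    have hEpos : 0 < ε * Real.exp (Λ * t) := mul_pos hε (Real.exp_pos _)
    set E : ℝ := ε * Real.exp (Λ * t) with hE
    have b0 : -E ≤ x t := hall 0
    have b1 : -E ≤ K - x t := hall 1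
    have b2 : -E ≤ y t := hall 2
    have b3 : -E ≤ K - y t := hall 3
    have b4 : -E ≤ z t := hall 4
    have b5 : -E ≤ K - z t := hall 5
    have b6 : -E ≤ z t - σ * x t := hall 6
    have b7 : -E ≤ y t - ρ * x t := hall 7
    have hxb := abs_le.1 (hxM t ht)
    have hyb := abs_le.1 (hyM t ht)
    have hzb := abs_le.1 (hzM t ht)
    fin_cases i
    · -- x = -E
      have hi' : x t = -E := hi
      show -(Λ * E) < k * x t - x t * y t
      rw [hi']
      nlinarith [mul_le_mul_of_nonneg_left hyb.1 hEpos.le, mul_pos hEpos hM0,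
        mul_pos hEpos hσM, mul_pos hEpos hρM, mul_pos hEpos hk₃σ,
        mul_pos hEpos hk₃, mul_pos hEpos hk₅, mul_pos hEpos hk]
    · -- K - x = -E, so x = K + E
      have hi' : K - x t = -E := hi
      show -(Λ * E) < -(k * x t - x t * y t)
      have hx' : x t = K + E := by linarith
      have hxpos : 0 < x t := by rw [hx']; linarith
      have hyk : -E ≤ y t - k := by nlinarith [b7, hK2, hx']
      nlinarith [mul_nonneg hxpos.le (show 0 ≤ y t - k + E by linarith),
        mul_le_mul_of_nonneg_right (hxb.2) hEpos.le,
        mul_pos hEpos hσM, mul_pos hEpos hρM, mul_pos hEpos hk₃σ,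
        mul_pos hEpos hk₃, mul_pos hEpos hk₅, mul_pos hEpos hk, mul_pos hEpos hM0]
    · -- y = -E
      have hi' : y t = -E := hi
      show -(Λ * E) < k₃ * (z t - y t)
      rw [hi']
      nlinarith [mul_le_mul_of_nonneg_left b4 hk₃.le, mul_pos hEpos hM0,
        mul_pos hEpos hσM, mul_pos hEpos hρM, mul_pos hEpos hk₃σ,
        mul_pos hEpos hk₃, mul_pos hEpos hk₅, mul_pos hEpos hk]
    · -- K - y = -E
      have hi' : K - y t = -E := hi
      show -(Λ * E) < -(k₃ * (z t - y t))
      have h1 : z t ≤ K + E := by linarith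
      have h2 : y t = K + E := by linarith
      nlinarith [mul_le_mul_of_nonneg_left (show z t ≤ y t by linarith) hk₃.le,
        mul_pos hEpos hM0, mul_pos hEpos hσM, mul_pos hEpos hρM, mul_pos hEpos hk₃σ,
        mul_pos hEpos hk₃, mul_pos hEpos hk₅, mul_pos hEpos hk]
    · -- z = -E
      have hi' : z t = -E := hi
      show -(Λ * E) < k₅ * (x t - z t)
      rw [hi']
      nlinarith [mul_le_mul_of_nonneg_left b0 hk₅.le, mul_pos hEpos hM0,
        mul_pos hEpos hσM, mul_pos hEpos hρM, mul_pos hEpos hk₃σ,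
        mul_pos hEpos hk₃, mul_pos hEpos hk₅, mul_pos hEpos hk]
    · -- K - z = -E
      have hi' : K - z t = -E := hi
      show -(Λ * E) < -(k₅ * (x t - z t))
      have h1 : x t ≤ K + E := by linarith
      have h2 : z t = K + E := by linarith
      nlinarith [mul_le_mul_of_nonneg_left (show x t ≤ z t by linarith) hk₅.le,
        mul_pos hEpos hM0, mul_pos hEpos hσM, mul_pos hEpos hρM, mul_pos hEpos hk₃σ,
        mul_pos hEpos hk₃, mul_pos hEpos hk₅, mul_pos hEpos hk]
    · -- z - σx = -E
      have hi' : z t - σ * x t = -E := hi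
      show -(Λ * E) < k₅ * (x t - z t) - σ * (k * x t - x t * y t)
      have hc : 0 ≤ k₅ - σ * (k + k₅) := by linarith
      rcases le_or_gt 0 (x t) with hX0 | hX0
      · -- x ≥ 0
        nlinarith [mul_nonneg hX0 hc,
          mul_le_mul_of_nonneg_left b2 hX0,   -- x*(-E) ≤ x*y
          mul_le_mul_of_nonneg_right hxb.2 hEpos.le,  -- x*E ≤ M*E
          mul_le_mul_of_nonneg_left (mul_le_mul_of_nonneg_right hxb.2 hEpos.le) hσ.le,
          mul_le_mul_of_nonneg_left (mul_le_mul_of_nonneg_left b2 hX0) hσ.le,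
          mul_pos hEpos hM0, mul_pos hEpos hσM, mul_pos hEpos hρM, mul_pos hEpos hk₃σ,
          mul_pos hEpos hk₃, mul_pos hEpos hk₅, mul_pos hEpos hk]
      · -- x < 0, so -E ≤ x < 0
        nlinarith [mul_le_mul_of_nonneg_right b0 hc,  -- (-E)*c ≤ x*c
          mul_le_mul_of_nonneg_left hσ2 hEpos.le,
          mul_le_mul_of_nonpos_left hyb.2 hX0.le,  -- x*M ≤ x*y
          mul_le_mul_of_nonneg_right b0 hM0.le,  -- (-E)*M ≤ x*M
          mul_le_mul_of_nonneg_left (mul_le_mul_of_nonpos_left hyb.2 hX0.le) hσ.le,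
          mul_le_mul_of_nonneg_left (mul_le_mul_of_nonneg_right b0 hM0.le) hσ.le,
          mul_pos hEpos hM0, mul_pos hEpos hσM, mul_pos hEpos hρM, mul_pos hEpos hk₃σ,
          mul_pos hEpos hk₃, mul_pos hEpos hk₅, mul_pos hEpos hk]
    · -- y - ρx = -E
      have hi' : y t - ρ * x t = -E := hi
      show -(Λ * E) < k₃ * (z t - y t) - ρ * (k * x t - x t * y t)
      have hc : 0 ≤ k₃ * σ - ρ * (k + k₃) := by linarith
      have hzs : k₃ * (-E) ≤ k₃ * (z t - σ * x t) := mul_le_mul_of_nonneg_left b6 hk₃.le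
      have hy' : y t = ρ * x t - E := by linarith
      nlinarith [mul_le_mul_of_nonneg_right b0 hc,   -- (-E)*c' ≤ x*c'
        mul_le_mul_of_nonneg_right hEpos.le hc,
        mul_le_mul_of_nonneg_left hρ2 hEpos.le,      -- E*(ρ(k+k₃)) ≤ E*(k₃σ)
        sq_nonneg (x t),
        mul_nonneg (mul_nonneg hρ.le hρ.le) (sq_nonneg (x t)),
        mul_le_mul_of_nonneg_right hxb.2 hEpos.le,    -- x*E ≤ M*E
        mul_le_mul_of_nonneg_left (mul_le_mul_of_nonneg_right hxb.2 hEpos.le) hρ.le,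
        mul_pos hEpos hM0, mul_pos hEpos hσM, mul_pos hEpos hρM, mul_pos hEpos hk₃σ,
        mul_pos hEpos hk₃, mul_pos hEpos hk₅, mul_pos hEpos hk]
end
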